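/- arXiv:math/0703466 — 3 statements merged into one kernel-verified Lean document; each statement's English description precedes it below -/
import Mathlib

section
/- Let f : ℝ² → ℝ² be a differentiable map with f(0) = 0. If Spec(f) ∩ ℝ = ∅ (no Jacobian derivative Df_p has a real eigenvalue), then f is a topological embedding with Fix(f²) = {0}, where f² = f ∘ f. -/
open Topology Filter Metric Set Function

noncomputable section

/-- The plane with the Euclidean norm. -/
abbrev Plane : Type := EuclideanSpace ℝ (Fin 2)

/-- `z : ℂ` is a complex eigenvalue of the continuous `ℝ`-linear map `L : ℝ² → ℝ²`,
i.e. a root of the characteristic polynomial of its matrix in the standard basis. -/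
def IsEigenvalueCLM (L : Plane →L[ℝ] Plane) (z : ℂ) : Prop :=
  (((LinearMap.toMatrix (EuclideanSpace.basisFun (Fin 2) ℝ).toBasis
      (EuclideanSpace.basisFun (Fin 2) ℝ).toBasis) L.toLinearMap).map
      (algebraMap ℝ ℂ)).charpoly.IsRoot z

/-- `Spec` of a map whose derivative at each point `p` is `Df p`: the set of all complex
eigenvalues of all the derivatives. -/
def spec (Df : Plane → Plane →L[ℝ] Plane) : Set ℂ :=
  {z | ∃ p : Plane, IsEigenvalueCLM (Df p) z}

/-! ### Auxiliary material: the standard area form on the plane -/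

/-- The standard area form (cross product) on the plane. -/
def om (u w : Plane) : ℝ := u 0 * w 1 - u 1 * w 0

lemma om_smul_left (c : ℝ) (u w : Plane) : om (c • u) w = c * om u w := by
  simp [om]; ring

lemma om_zero_right (u : Plane) : om u 0 = 0 := by simp [om]

lemma om_split (v a b c : Plane) : om v (a - c) + om v (b - a) = om v (b - c) := by
  simp [om]; ring

lemma om_sub_right (v a b : Plane) : om v (a - b) = om v a - om v b := by
  simp [om]; ring

lemma abs_om_le (u w : Plane) : |om u w| ≤ ‖u‖ * ‖w‖ := by
  have hu : ‖u‖ = Real.sqrt (u 0 ^ 2 + u 1 ^ 2) := by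
    rw [EuclideanSpace.norm_eq]
    congr 1
    simp [Fin.sum_univ_two, Real.norm_eq_abs, sq_abs]
  have hw : ‖w‖ = Real.sqrt (w 0 ^ 2 + w 1 ^ 2) := by
    rw [EuclideanSpace.norm_eq]
    congr 1
    simp [Fin.sum_univ_two, Real.norm_eq_abs, sq_abs]
  rw [hu, hw, ← Real.sqrt_mul (by positivity), ← Real.sqrt_sq_eq_abs]
  apply Real.sqrt_le_sqrt
  unfold om
  nlinarith [sq_nonneg (u 0 * w 0 + u 1 * w 1)]

lemma om_cont2 {X : Type*} [TopologicalSpace X] {u w : X → Plane}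
    (hu : Continuous u) (hw : Continuous w) : Continuous fun x => om (u x) (w x) := by
  unfold om
  exact ((((EuclideanSpace.proj (0 : Fin 2)).continuous.comp hu).mul
    ((EuclideanSpace.proj (1 : Fin 2)).continuous.comp hw)).sub
    (((EuclideanSpace.proj (1 : Fin 2)).continuous.comp hu).mul
    ((EuclideanSpace.proj (0 : Fin 2)).continuous.comp hw)))

/-- If `om v w = 0` and `v ≠ 0` then `w` is a real multiple of `v`. -/
lemma om_zero_parallel {v w : Plane} (hv : v ≠ 0) (h : om v w = 0) :
    ∃ t : ℝ, w = t • v := by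
  have hv' : v 0 ≠ 0 ∨ v 1 ≠ 0 := by
    by_contra hc
    push_neg at hc
    apply hv
    ext i
    fin_cases i <;> simp [hc.1, hc.2]
  unfold om at h
  rcases hv' with h0 | h1
  · refine ⟨w 0 / v 0, ?_⟩
    ext i
    fin_cases i <;> simp only [Fin.zero_eta, Fin.mk_one, PiLp.smul_apply, smul_eq_mul] <;> field_simp <;> nlinarith [h]
  · refine ⟨w 1 / v 1, ?_⟩
    ext i
    fin_cases i <;> simp only [Fin.zero_eta, Fin.mk_one, PiLp.smul_apply, smul_eq_mul] <;> field_simp <;> nlinarith [h]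

/-- A real eigenvector-eigenvalue pair produces a complex eigenvalue in the sense of
`IsEigenvalueCLM`. -/
lemma isEigenvalue_of_eigenvector (L : Plane →L[ℝ] Plane) {v : Plane} {t : ℝ}
    (hv : v ≠ 0) (hLv : L v = t • v) : IsEigenvalueCLM L (t : ℂ) := by
  set B := (EuclideanSpace.basisFun (Fin 2) ℝ).toBasis with hB
  set M := LinearMap.toMatrix B B L.toLinearMap with hMdef
  have h1 : M.mulVec ⇑(B.repr v) = ⇑(B.repr (L v)) :=
    LinearMap.toMatrix_mulVec_repr B B L.toLinearMap v
  have hdet : (Matrix.scalar (Fin 2) t - M).det = 0 := by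
    rw [← Matrix.exists_mulVec_eq_zero_iff]
    refine ⟨⇑(B.repr v), ?_, ?_⟩
    · intro hcoe
      exact hv ((LinearEquiv.map_eq_zero_iff B.repr).mp (DFunLike.coe_injective hcoe))
    · rw [Matrix.sub_mulVec, h1, hLv, map_smul]
      funext i
      simp [Matrix.mulVec, Matrix.scalar, dotProduct, Matrix.diagonal, Finset.sum_ite_eq,
        mul_comm]
      fin_cases i <;> simp
  have hcp : M.charpoly.eval t = 0 := by
    rw [Matrix.charpoly, eval_det, Matrix.matPolyEquiv_charmatrix,
      Polynomial.eval_sub, Polynomial.eval_X, Polynomial.eval_C]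
    exact hdet
  show (((M).map (algebraMap ℝ ℂ)).charpoly).IsRoot (t : ℂ)
  rw [Matrix.charpoly_map]
  have ht : ((t : ℂ)) = (algebraMap ℝ ℂ) t := rfl
  rw [Polynomial.IsRoot, ht, Polynomial.eval_map, Polynomial.eval₂_at_apply, hcp, map_zero]

section main

variable {f : Plane → Plane} {Df : Plane → Plane →L[ℝ] Plane}

/-- The fundamental consequence of Rolle's theorem: for a map all of whose derivatives have no
real eigenvalue, `f b - f a` is never `om`-orthogonal to `b - a` for `a ≠ b`. -/
lemma segment_lemma (hdiff : ∀ p : Plane, HasFDerivAt f (Df p) p)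
    (hkey : ∀ (p v : Plane), v ≠ 0 → om v (Df p v) ≠ 0) :
    ∀ a b : Plane, a ≠ b → om (b - a) (f b - f a) ≠ 0 := by
  intro a b hab h
  set v := b - a with hv
  have hvne : v ≠ 0 := sub_ne_zero.mpr (Ne.symm hab)
  set φ : ℝ → ℝ := fun t => om v (f (a + t • v)) with hφ
  set φ' : ℝ → ℝ := fun t => om v (Df (a + t • v) v) with hφ'
  have hder : ∀ t : ℝ, HasDerivAt φ (φ' t) t := by
    intro t
    have hc : HasDerivAt (fun t : ℝ => a + t • v) v t := by
      simpa using ((hasDerivAt_id t).smul_const v).const_add a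
    have hu : HasDerivAt (fun t : ℝ => f (a + t • v)) (Df (a + t • v) v) t :=
      (hdiff (a + t • v)).comp_hasDerivAt t hc
    have h0 : HasDerivAt (fun t : ℝ => f (a + t • v) 0) (Df (a + t • v) v 0) t := by
      have := (EuclideanSpace.proj (0 : Fin 2)).hasFDerivAt.comp_hasDerivAt t hu
      exact this
    have h1 : HasDerivAt (fun t : ℝ => f (a + t • v) 1) (Df (a + t • v) v 1) t := by
      have := (EuclideanSpace.proj (1 : Fin 2)).hasFDerivAt.comp_hasDerivAt t hu
      exact this
    have := (h1.const_mul (v 0)).sub (h0.const_mul (v 1))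
    exact this
  have h01 : φ 0 = φ 1 := by
    have e0 : a + (0 : ℝ) • v = a := by simp
    have e1 : a + (1 : ℝ) • v = b := by simp [hv]
    have : φ 1 - φ 0 = om v (f b - f a) := by
      rw [hφ]
      simp only [e0, e1]
      rw [om_sub_right]
    linarith [this, h]
  obtain ⟨c, _, hc0⟩ := exists_hasDerivAt_eq_zero zero_lt_one
    (fun x _ => (hder x).continuousAt.continuousWithinAt) h01 (fun x _ => hder x)
  exact hkey (a + c • v) v hvne hc0

/-- By connectedness the nonvanishing quantity `om (b - a) (f b - f a)` has constant sign. -/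
lemma sign_lemma (hcont : Continuous f)
    (hseg : ∀ a b : Plane, a ≠ b → om (b - a) (f b - f a) ≠ 0) :
    (∀ a b : Plane, a ≠ b → 0 < om (b - a) (f b - f a)) ∨
    (∀ a b : Plane, a ≠ b → 0 < -om (b - a) (f b - f a)) := by
  set S : Plane × Plane → ℝ := fun q => om q.2 (f (q.1 + q.2) - f q.1) with hS
  set U : Set (Plane × Plane) := univ ×ˢ {v : Plane | v ≠ 0} with hU
  have hrank : 1 < Module.rank ℝ Plane := by
    rw [← Module.finrank_eq_rank]
    norm_cast
    simp [finrank_euclideanSpace_fin]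
  have hUconn : IsPreconnected U :=
    isPreconnected_univ.prod (isConnected_compl_singleton_of_one_lt_rank hrank 0).isPreconnected
  have hScont : Continuous S :=
    om_cont2 continuous_snd ((hcont.comp (continuous_fst.add continuous_snd)).sub
      (hcont.comp continuous_fst))
  have hSne : ∀ q ∈ U, S q ≠ 0 := by
    rintro ⟨a, v⟩ hq
    have hv : v ≠ 0 := hq.2
    have hne : a ≠ a + v := by
      intro h; exact hv (by simpa using h.symm)
    have := hseg a (a + v) hne
    simpa [hS] using this
  by_contra hc
  push_neg at hc
  obtain ⟨⟨a₁, b₁, hab₁, hpos₁⟩, ⟨a₂, b₂, hab₂, hpos₂⟩⟩ := hc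
  have hq₁ : (a₁, b₁ - a₁) ∈ U := ⟨mem_univ _, sub_ne_zero.mpr (Ne.symm hab₁)⟩
  have hq₂ : (a₂, b₂ - a₂) ∈ U := ⟨mem_univ _, sub_ne_zero.mpr (Ne.symm hab₂)⟩
  have hb₁ : a₁ + (b₁ - a₁) = b₁ := by abel
  have hb₂ : a₂ + (b₂ - a₂) = b₂ := by abel
  have e₁ : S (a₁, b₁ - a₁) = om (b₁ - a₁) (f b₁ - f a₁) := by simp only [hS, hb₁]
  have e₂ : S (a₂, b₂ - a₂) = om (b₂ - a₂) (f b₂ - f a₂) := by simp only [hS, hb₂]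
  have hlt₁ : S (a₁, b₁ - a₁) < 0 :=
    lt_of_le_of_ne (e₁ ▸ hpos₁) (hSne _ hq₁)
  have hgt₂ : 0 < S (a₂, b₂ - a₂) :=
    lt_of_le_of_ne (by linarith [e₂ ▸ hpos₂]) (Ne.symm (hSne _ hq₂))
  have h0 : (0 : ℝ) ∈ Icc (S (a₁, b₁ - a₁)) (S (a₂, b₂ - a₂)) := ⟨hlt₁.le, hgt₂.le⟩
  obtain ⟨q, hqU, hq0⟩ := hUconn.intermediate_value hq₁ hq₂ hScont.continuousOn h0
  exact hSne q hqU hq0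

end main

/-- A continuous map of the plane which is strictly monotone with respect to (either orientation
of) the area form is a topological embedding. -/
lemma embedding_of_mono {g : Plane → Plane} (hg : Continuous g) {s : ℝ} (hs : s = 1 ∨ s = -1)
    (hmono : ∀ a b : Plane, a ≠ b → 0 < s * om (b - a) (g b - g a)) :
    Topology.IsEmbedding g := by
  have hinj : Function.Injective g := by
    intro a b hab
    by_contra hne
    have h1 := hmono b a (fun h => hne h.symm)
    rw [hab, sub_self, om_zero_right, mul_zero] at h1
    exact lt_irrefl 0 h1
  have hkey : ∀ (x : Plane) (ε : ℝ), 0 < ε →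
      ∃ δ > 0, ∀ y : Plane, dist (g y) (g x) < δ → dist y x < ε := by
    intro x ε hε
    set h : Plane → ℝ := fun z => s * om (z - x) (g z - g x) with hh
    have hhc : Continuous h :=
      continuous_const.mul (om_cont2 (continuous_id.sub continuous_const) (hg.sub continuous_const))
    obtain ⟨z₀, hz₀S, hz₀min⟩ := (isCompact_sphere x ε).exists_isMinOn
      (NormedSpace.sphere_nonempty.mpr hε.le) hhc.continuousOn
    set m := h z₀ with hm
    have hz₀x : z₀ ≠ x := by
      intro hzx
      have := mem_sphere.mp hz₀S
      rw [hzx, dist_self] at this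
      exact absurd this.symm (ne_of_gt hε)
    have hmpos : 0 < m := hmono x z₀ (Ne.symm hz₀x)
    refine ⟨m / ε, div_pos hmpos hε, ?_⟩
    intro y hy
    by_contra hfar
    push_neg at hfar
    have hr : ε ≤ ‖y - x‖ := by rwa [← dist_eq_norm]
    have hrpos : (0 : ℝ) < ‖y - x‖ := lt_of_lt_of_le hε hr
    set c₁ : ℝ := ε / ‖y - x‖ with hc₁
    have hc₁pos : 0 < c₁ := div_pos hε hrpos
    set z : Plane := x + c₁ • (y - x) with hz
    have hzx : z - x = c₁ • (y - x) := by rw [hz]; abel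
    have hznorm : ‖z - x‖ = ε := by
      rw [hzx, norm_smul, Real.norm_eq_abs, abs_of_pos hc₁pos, hc₁,
        div_mul_cancel₀ _ (ne_of_gt hrpos)]
    have hzS : z ∈ sphere x ε := by rwa [mem_sphere, dist_eq_norm]
    have hmin : m ≤ h z := hz₀min hzS
    have hbracket : 0 ≤ s * om (z - x) (g y - g z) := by
      by_cases hyz : y = z
      · rw [hyz, sub_self, om_zero_right, mul_zero]
      · have hyz' : y - z = (1 - c₁) • (y - x) := by
          rw [hz, sub_smul, one_smul]; abel
        have hc₁lt : c₁ < 1 := by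
          rcases lt_or_eq_of_le ((div_le_one hrpos).mpr hr) with h | h
          · exact h
          · exfalso
            apply hyz
            have hc1 : c₁ = 1 := hc₁.trans h
            have hzero : y - z = 0 := by rw [hyz', hc1, sub_self, zero_smul]
            exact sub_eq_zero.mp hzero
        have hc₂pos : 0 < 1 - c₁ := by linarith
        have h2 := hmono z y (fun hne => hyz hne.symm)
        rw [hyz', om_smul_left] at h2
        have h3 : 0 < s * om (y - x) (g y - g z) := by
          rcases hs with h | h <;> nlinarith [h2]
        rw [hzx, om_smul_left]
        nlinarith [h3]
    have hsum : s * om (z - x) (g z - g x) + s * om (z - x) (g y - g z) =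
        s * om (z - x) (g y - g x) := by
      rw [← mul_add, om_split]
    have hmin' : m ≤ s * om (z - x) (g z - g x) := hmin
    have hge : m ≤ s * om (z - x) (g y - g x) := by
      rw [← hsum]; linarith [hmin']
    have hbound : s * om (z - x) (g y - g x) ≤ ε * ‖g y - g x‖ := by
      have h1 : s * om (z - x) (g y - g x) ≤ |om (z - x) (g y - g x)| := by
        rcases hs with h | h
        · rw [h, one_mul]; exact le_abs_self _
        · rw [h, neg_one_mul]; exact neg_le_abs _
      calc s * om (z - x) (g y - g x) ≤ |om (z - x) (g y - g x)| := h1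
        _ ≤ ‖z - x‖ * ‖g y - g x‖ := abs_om_le _ _
        _ = ε * ‖g y - g x‖ := by rw [hznorm]
    have hlt : ε * ‖g y - g x‖ < ε * (m / ε) := by
      rw [← dist_eq_norm] at *
      exact mul_lt_mul_of_pos_left hy hε
    rw [mul_div_cancel₀ _ (ne_of_gt hε)] at hlt
    linarith
  refine ⟨isInducing_iff_nhds.mpr fun x =>
    le_antisymm (map_le_iff_le_comap.mp (hg.tendsto x)) ?_, hinj⟩
  rw [(nhds_basis_ball.comap g).le_basis_iff nhds_basis_ball]
  intro ε hε
  obtain ⟨δ, hδ, hδ'⟩ := hkey x ε hε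
  exact ⟨δ, hδ, fun y hy =>
    by simpa [mem_ball, dist_comm] using hδ' y (by simpa [mem_ball] using hy)⟩

/-- A differentiable map of the plane fixing the origin with no real eigenvalue of any
derivative is a topological embedding with `Fix(f²) = {0}`. -/
theorem stmt11 (f : Plane → Plane) (Df : Plane → Plane →L[ℝ] Plane)
    (hdiff : ∀ p : Plane, HasFDerivAt f (Df p) p)
    (h0 : f 0 = 0)
    (hspec : spec Df ∩ Set.range (Complex.ofReal) = ∅) :
    Topology.IsEmbedding f ∧ {p : Plane | f (f p) = p} = {0} := by
  have hcont : Continuous f := continuous_iff_continuousAt.mpr fun p => (hdiff p).continuousAt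
  have hkey : ∀ p v : Plane, v ≠ 0 → om v (Df p v) ≠ 0 := by
    intro p v hv h
    obtain ⟨t, ht⟩ := om_zero_parallel hv h
    have heig : IsEigenvalueCLM (Df p) (t : ℂ) := isEigenvalue_of_eigenvector (Df p) hv ht
    have hmem : (t : ℂ) ∈ spec Df ∩ Set.range (Complex.ofReal) := ⟨⟨p, heig⟩, ⟨t, rfl⟩⟩
    rw [hspec] at hmem
    exact hmem
  have hseg := segment_lemma hdiff hkey
  have hemb : Topology.IsEmbedding f := by
    rcases sign_lemma hcont hseg with hpos | hneg
    · refine embedding_of_mono hcont (Or.inl rfl) ?_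
      intro a b hab
      simpa using hpos a b hab
    · refine embedding_of_mono hcont (Or.inr rfl) ?_
      intro a b hab
      have := hneg a b hab
      rw [neg_one_mul]
      linarith
  refine ⟨hemb, ?_⟩
  ext p
  simp only [mem_setOf_eq, mem_singleton_iff]
  constructor
  · intro hp
    by_contra hp0
    by_cases hfp : f p = p
    · apply hseg 0 p (fun h => hp0 h.symm)
      rw [h0, hfp]
      simp [om]
      ring
    · apply hseg p (f p) (fun h => hfp h.symm)
      rw [hp]
      simp [om]
      ring
  · intro hp
    rw [hp, h0, h0]
end
end

section
/- Let f : ℝⁿ → ℝⁿ be a C¹ map with f(0) = 0. Suppose there exist R > 0 and 0 < α < 1 such that ‖Df_p · p‖ < α‖p‖ for every p with ‖p‖ > R. Then there exist S₀ > R and μ with α < μ < 1 such that for every p ∈ ℝⁿ with ‖p‖ ≥ S₀ one has ‖f(p)‖ ≤ μ‖p‖. -/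
open Topology Filter Metric Set Function

noncomputable section

/-- If `f : ℝⁿ → ℝⁿ` is `C¹` with `f 0 = 0` and `‖Df_p · p‖ < α ‖p‖` for `‖p‖ > R`
(with `0 < α < 1`), then there are `S₀ > R` and `α < μ < 1` such that `‖f p‖ ≤ μ ‖p‖`
whenever `‖p‖ ≥ S₀`. -/
theorem stmt16 (n : ℕ)
    (f : EuclideanSpace ℝ (Fin n) → EuclideanSpace ℝ (Fin n))
    (hC1 : ContDiff ℝ 1 f)
    (h0 : f 0 = 0)
    (R α : ℝ) (hR : 0 < R) (hα0 : 0 < α) (hα1 : α < 1)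
    (hcontr : ∀ p : EuclideanSpace ℝ (Fin n), R < ‖p‖ → ‖fderiv ℝ f p p‖ < α * ‖p‖) :
    ∃ S₀ : ℝ, R < S₀ ∧ ∃ μ : ℝ, α < μ ∧ μ < 1 ∧
      ∀ p : EuclideanSpace ℝ (Fin n), S₀ ≤ ‖p‖ → ‖f p‖ ≤ μ * ‖p‖ := by
  have hdiff : Differentiable ℝ f := hC1.differentiable one_ne_zero
  -- bound f on the closed ball of radius R+1
  obtain ⟨M, hM⟩ := (isCompact_closedBall (0 : EuclideanSpace ℝ (Fin n)) (R + 1)).exists_bound_of_continuousOn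
    (hC1.continuous.continuousOn.comp continuousOn_id (fun x hx => hx))
  have hM0 : 0 ≤ M := le_trans (norm_nonneg _) (hM 0 (Metric.mem_closedBall_self (by linarith)))
  set μ : ℝ := (1 + α) / 2 with hμ
  have hαμ : α < μ := by rw [hμ]; linarith
  have hμ1 : μ < 1 := by rw [hμ]; linarith
  have hdiv : 0 ≤ 2 * M / (1 - α) := div_nonneg (by linarith) (by linarith)
  refine ⟨R + 1 + 2 * M / (1 - α), by linarith, μ, hαμ, hμ1, ?_⟩
  intro p hp
  have hpR : R + 1 ≤ ‖p‖ := le_trans (by linarith) hp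
  have hpn : 0 < ‖p‖ := lt_of_lt_of_le (by linarith) hpR
  set s : ℝ := (R + 1) / ‖p‖ with hs
  have hs0 : 0 < s := by positivity
  have hs1 : s ≤ 1 := by rw [hs, div_le_one hpn]; exact hpR
  have hsp : s * ‖p‖ = R + 1 := div_mul_cancel₀ _ hpn.ne'
  -- mean value inequality along the segment
  have key : ∀ x ∈ Icc s 1, ‖f (x • p) - f (s • p)‖ ≤ α * ‖p‖ * (x - s) := by
    apply norm_image_sub_le_of_norm_deriv_le_segment'
      (f' := fun t => fderiv ℝ f (t • p) p)
    · intro t ht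
      have := ((hdiff (t • p)).hasFDerivAt.comp_hasDerivAt t
        ((hasDerivAt_id t).smul_const p)).hasDerivWithinAt (s := Icc s 1)
      simpa [Function.comp_def] using this
    · intro t ht
      have ht0 : 0 < t := lt_of_lt_of_le hs0 ht.1
      have htn : ‖t • p‖ = t * ‖p‖ := by
        rw [norm_smul, Real.norm_eq_abs, abs_of_pos ht0]
      have hgt : R < ‖t • p‖ := by
        rw [htn]
        have : s * ‖p‖ ≤ t * ‖p‖ := by
          apply mul_le_mul_of_nonneg_right ht.1 hpn.le
        linarith [hsp ▸ this]
      have := hcontr (t • p) hgt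
      rw [map_smul, norm_smul, Real.norm_eq_abs, abs_of_pos ht0, htn] at this
      have h2 : t * ‖fderiv ℝ f (t • p) p‖ < t * (α * ‖p‖) := by ring_nf at this ⊢; linarith
      exact le_of_lt (lt_of_mul_lt_mul_left h2 ht0.le)
  have h1 := key 1 ⟨hs1, le_refl 1⟩
  rw [one_smul] at h1
  have hMsp : ‖f (s • p)‖ ≤ M := by
    apply hM
    simp only [Metric.mem_closedBall, dist_zero_right]
    rw [norm_smul, Real.norm_eq_abs, abs_of_pos hs0, hsp]
  have hfp : ‖f p‖ ≤ α * ‖p‖ * (1 - s) + M :=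
    calc ‖f p‖ ≤ ‖f p - f (s • p)‖ + ‖f (s • p)‖ := by have := norm_le_insert' (f p) (f (s • p)); linarith [this]
    _ ≤ α * ‖p‖ * (1 - s) + M := add_le_add h1 hMsp
  have hbound : α * ‖p‖ * (1 - s) + M ≤ μ * ‖p‖ := by
    have h2 : α * ‖p‖ * (1 - s) ≤ α * ‖p‖ := by nlinarith
    have h3 : M ≤ (μ - α) * ‖p‖ := by
      have : 2 * M / (1 - α) ≤ ‖p‖ := by linarith
      have h4 : 2 * M ≤ (1 - α) * ‖p‖ := by
        rw [div_le_iff₀ (by linarith)] at this; linarith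
      have : μ - α = (1 - α) / 2 := by rw [hμ]; ring
      rw [this]; linarith
    linarith
  linarith
end
end

section
/- Let C > 0 and let 𝒜 be the set of 2×2 real matrices A with ‖A‖ ≤ C and sr(A) ≤ 0.9. Then there exists ε with 0 < ε < 1/(8C) such that: for every 2×2 real matrix B = bI + E, where 1/(2C) ≤ b ≤ 1 and every entry of E has absolute value less than ε, and for every A ∈ 𝒜, one has sr(BA) ≤ 0.95. -/
open Topology Filter Metric Set Function

noncomputable section

/-- `z : ℂ` is a complex eigenvalue of the `2 × 2` real matrix `A`. -/
def IsMatrixEigenvalue (A : Matrix (Fin 2) (Fin 2) ℝ) (z : ℂ) : Prop :=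
  ((A.map (algebraMap ℝ ℂ)).charpoly).IsRoot z

/-- The operator norm of a `2 × 2` real matrix with respect to the Euclidean norm. -/
def matrixOpNorm (A : Matrix (Fin 2) (Fin 2) ℝ) : ℝ :=
  ‖LinearMap.toContinuousLinearMap (Matrix.toEuclideanLin A)‖


lemma charpoly_root_iff (N : Matrix (Fin 2) (Fin 2) ℂ) (z : ℂ) :
    N.charpoly.IsRoot z ↔ z^2 - N.trace * z + N.det = 0 := by
  rw [Matrix.charpoly, Matrix.det_fin_two, Matrix.trace_fin_two, Matrix.det_fin_two]
  rw [Matrix.charmatrix_apply_eq, Matrix.charmatrix_apply_eq,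
    Matrix.charmatrix_apply_ne N 0 1 (by decide),
    Matrix.charmatrix_apply_ne N 1 0 (by decide)]
  simp only [Polynomial.IsRoot, Polynomial.eval_sub, Polynomial.eval_mul, Polynomial.eval_add,
    Polynomial.eval_neg, Polynomial.eval_X, Polynomial.eval_C]
  constructor <;> intro h <;> linear_combination h

lemma eigen_iff (M : Matrix (Fin 2) (Fin 2) ℝ) (z : ℂ) :
    IsMatrixEigenvalue M z ↔ z^2 - (M.trace : ℂ) * z + (M.det : ℂ) = 0 := by
  rw [IsMatrixEigenvalue, charpoly_root_iff]
  have h1 : (M.map (algebraMap ℝ ℂ)).trace = (M.trace : ℂ) := by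
    simp [Matrix.trace_fin_two, Matrix.map_apply]
  have h2 : (M.map (algebraMap ℝ ℂ)).det = (M.det : ℂ) := by
    simp [Matrix.det_fin_two, Matrix.map_apply]
  rw [h1, h2]

lemma entry_le_opNorm (A : Matrix (Fin 2) (Fin 2) ℝ) (i j : Fin 2) :
    |A i j| ≤ matrixOpNorm A := by
  set f := LinearMap.toContinuousLinearMap (Matrix.toEuclideanLin A)
  have hv : ‖(EuclideanSpace.single j (1:ℝ) : EuclideanSpace ℝ (Fin 2))‖ = 1 := by
    simp [EuclideanSpace.norm_single]
  have h1 : ‖f (EuclideanSpace.single j 1)‖ ≤ matrixOpNorm A := by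
    calc ‖f (EuclideanSpace.single j 1)‖ ≤ ‖f‖ * ‖(EuclideanSpace.single j (1:ℝ) : EuclideanSpace ℝ (Fin 2))‖ := f.le_opNorm _
    _ = matrixOpNorm A := by rw [hv, mul_one]; rfl
  refine le_trans ?_ h1
  have hfv : f (EuclideanSpace.single j 1) i = A i j := by
    show Matrix.toEuclideanLin A (EuclideanSpace.single j 1) i = A i j
    rw [Matrix.toEuclideanLin_apply]
    show A.mulVec (Pi.single j 1) i = A i j
    rw [Matrix.mulVec_single]; exact mul_one _
  rw [← hfv]
  have := EuclideanSpace.norm_eq (f (EuclideanSpace.single j (1:ℝ)))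
  rw [this]
  have : |f (EuclideanSpace.single j (1:ℝ)) i| = Real.sqrt (‖f (EuclideanSpace.single j (1:ℝ)) i‖^2) := by
    rw [Real.norm_eq_abs, Real.sqrt_sq_eq_abs, abs_abs]
  rw [this]
  apply Real.sqrt_le_sqrt
  exact Finset.single_le_sum (f := fun k => ‖f (EuclideanSpace.single j (1:ℝ)) k‖^2)
    (fun k _ => sq_nonneg _) (Finset.mem_univ i)

lemma quad_roots (t d : ℂ) : ∃ l1 l2 : ℂ, l1 + l2 = t ∧ l1 * l2 = d := by
  obtain ⟨w, hw⟩ := IsAlgClosed.exists_pow_nat_eq (t^2 - 4*d) (n := 2) two_pos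
  exact ⟨(t+w)/2, (t-w)/2, by ring, by linear_combination -hw/4⟩

set_option maxHeartbeats 1600000 in
/-- Given `C > 0`, there exists `0 < ε < 1/(8C)` such that for every matrix
`B = b I + E` with `1/(2C) ≤ b ≤ 1` and all entries of `E` of absolute value `< ε`,
and every `A` with `‖A‖ ≤ C` and `sr(A) ≤ 0.9`, one has `sr(BA) ≤ 0.95`. -/
theorem stmt17 (C : ℝ) (hC : 0 < C) :
    ∃ ε : ℝ, 0 < ε ∧ ε < 1 / (8 * C) ∧
      ∀ (b : ℝ) (E : Matrix (Fin 2) (Fin 2) ℝ),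
        1 / (2 * C) ≤ b → b ≤ 1 → (∀ i j, |E i j| < ε) →
        ∀ A : Matrix (Fin 2) (Fin 2) ℝ,
          matrixOpNorm A ≤ C →
          (∀ z : ℂ, IsMatrixEigenvalue A z → ‖z‖ ≤ 0.9) →
          ∀ z : ℂ,
            IsMatrixEigenvalue ((b • (1 : Matrix (Fin 2) (Fin 2) ℝ) + E) * A) z →
            ‖z‖ ≤ 0.95 := by
  have hC1 : (0:ℝ) < C + 1 := by linarith
  refine ⟨min (1/(16*C)) (1/(20000*(C+1))), lt_min (by positivity) (by positivity), ?_, ?_⟩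
  · calc min (1/(16*C)) (1/(20000*(C+1))) ≤ 1/(16*C) := min_le_left _ _
      _ < 1/(8*C) := by
        apply one_div_lt_one_div_of_lt (by positivity)
        linarith
  intro b E hb1 hb2 hE A hAnorm hAeig z hz
  set ε := min (1/(16*C)) (1/(20000*(C+1))) with hεdef
  have hε0 : 0 < ε := lt_min (by positivity) (by positivity)
  have hε1 : ε ≤ 1/(16*C) := min_le_left _ _
  have hε2 : ε ≤ 1/(20000*(C+1)) := min_le_right _ _
  have hεC : ε * C ≤ 1/16 := by
    calc ε * C ≤ (1/(16*C)) * C := mul_le_mul_of_nonneg_right hε1 hC.le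
      _ = 1/16 := by field_simp
  have hεC2 : ε * C ≤ 1/20000 := by
    calc ε * C ≤ (1/(20000*(C+1))) * C := mul_le_mul_of_nonneg_right hε2 hC.le
      _ ≤ 1/20000 := by
        rw [div_mul_eq_mul_div, div_le_div_iff₀ (by positivity) (by norm_num)]
        nlinarith
  have hεsmall : ε ≤ 1/20000 := by
    refine hε2.trans ?_
    rw [div_le_div_iff₀ (by positivity) (by norm_num)]
    nlinarith
  have hb0 : 0 < b := lt_of_lt_of_le (by positivity) hb1
  have hAij : ∀ i j, |A i j| ≤ C := fun i j => (entry_le_opNorm A i j).trans hAnorm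
  -- eigenvalues of A
  obtain ⟨l1, l2, hsum, hprod⟩ := quad_roots ((A.trace : ℝ) : ℂ) ((A.det : ℝ) : ℂ)
  have hl1 : ‖l1‖ ≤ 0.9 := by
    apply hAeig
    rw [eigen_iff]
    linear_combination l1 * hsum - hprod
  have hl2 : ‖l2‖ ≤ 0.9 := by
    apply hAeig
    rw [eigen_iff]
    linear_combination l2 * hsum - hprod
  have hl1' : ‖l1‖ ≤ 0.9 := by exact hl1
  have hl2' : ‖l2‖ ≤ 0.9 := by exact hl2
  have ht : |A.trace| ≤ 1.8 := by
    have : ‖((A.trace : ℝ) : ℂ)‖ ≤ 1.8 := by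
      rw [← hsum]
      calc ‖l1 + l2‖ ≤ ‖l1‖ + ‖l2‖ := norm_add_le _ _
        _ ≤ 1.8 := by linarith
    rwa [Complex.norm_real, Real.norm_eq_abs] at this
  have hd : |A.det| ≤ 0.81 := by
    have : ‖((A.det : ℝ) : ℂ)‖ ≤ 0.81 := by
      rw [← hprod, norm_mul]
      calc ‖l1‖ * ‖l2‖ ≤ 0.9 * 0.9 :=
        mul_le_mul hl1' hl2' (norm_nonneg _) (by norm_num)
        _ = 0.81 := by norm_num
    rwa [Complex.norm_real, Real.norm_eq_abs] at this
  -- matrix algebra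
  have hM : (b • (1 : Matrix (Fin 2) (Fin 2) ℝ) + E) * A = b • A + E * A := by
    rw [add_mul, Matrix.smul_mul, one_mul]
  have htrM : ((b • (1 : Matrix (Fin 2) (Fin 2) ℝ) + E) * A).trace
      = b * A.trace + (E * A).trace := by
    rw [hM, Matrix.trace_add, Matrix.trace_smul, smul_eq_mul]
  have hdetM : ((b • (1 : Matrix (Fin 2) (Fin 2) ℝ) + E) * A).det
      = (b • (1 : Matrix (Fin 2) (Fin 2) ℝ) + E).det * A.det := Matrix.det_mul _ _
  have htrEA : (E * A).trace
      = E 0 0 * A 0 0 + E 0 1 * A 1 0 + (E 1 0 * A 0 1 + E 1 1 * A 1 1) := by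
    simp [Matrix.trace_fin_two, Matrix.mul_apply, Fin.sum_univ_two]
  have hdetB : (b • (1 : Matrix (Fin 2) (Fin 2) ℝ) + E).det
      = (b + E 0 0) * (b + E 1 1) - E 0 1 * E 1 0 := by
    rw [Matrix.det_fin_two]
    simp [Matrix.add_apply, Matrix.smul_apply, Matrix.one_apply, smul_eq_mul]
  -- bounds on perturbation
  have hδt : |(E * A).trace| ≤ 4 * (ε * C) := by
    rw [htrEA]
    have h1 : |E 0 0 * A 0 0| ≤ ε * C := by
      rw [abs_mul]; exact mul_le_mul (hE 0 0).le (hAij 0 0) (abs_nonneg _) hε0.le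
    have h2 : |E 0 1 * A 1 0| ≤ ε * C := by
      rw [abs_mul]; exact mul_le_mul (hE 0 1).le (hAij 1 0) (abs_nonneg _) hε0.le
    have h3 : |E 1 0 * A 0 1| ≤ ε * C := by
      rw [abs_mul]; exact mul_le_mul (hE 1 0).le (hAij 0 1) (abs_nonneg _) hε0.le
    have h4 : |E 1 1 * A 1 1| ≤ ε * C := by
      rw [abs_mul]; exact mul_le_mul (hE 1 1).le (hAij 1 1) (abs_nonneg _) hε0.le
    calc |E 0 0 * A 0 0 + E 0 1 * A 1 0 + (E 1 0 * A 0 1 + E 1 1 * A 1 1)|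
        ≤ |E 0 0 * A 0 0 + E 0 1 * A 1 0| + |E 1 0 * A 0 1 + E 1 1 * A 1 1| := abs_add_le _ _
      _ ≤ (|E 0 0 * A 0 0| + |E 0 1 * A 1 0|) + (|E 1 0 * A 0 1| + |E 1 1 * A 1 1|) :=
          add_le_add (abs_add_le _ _) (abs_add_le _ _)
      _ ≤ 4 * (ε * C) := by linarith
  have hD : |(b • (1 : Matrix (Fin 2) (Fin 2) ℝ) + E).det - b^2| ≤ 2*ε + 2*ε^2 := by
    rw [hdetB]
    have heq : (b + E 0 0) * (b + E 1 1) - E 0 1 * E 1 0 - b^2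
        = b * (E 0 0 + E 1 1) + (E 0 0 * E 1 1 - E 0 1 * E 1 0) := by ring
    rw [heq]
    have k1 : |b * (E 0 0 + E 1 1)| ≤ 2*ε := by
      rw [abs_mul, abs_of_nonneg hb0.le]
      have : |E 0 0 + E 1 1| ≤ 2*ε := by
        calc |E 0 0 + E 1 1| ≤ |E 0 0| + |E 1 1| := abs_add_le _ _
          _ ≤ 2*ε := by linarith [(hE 0 0).le, (hE 1 1).le]
      nlinarith [abs_nonneg (E 0 0 + E 1 1)]
    have k2 : |E 0 0 * E 1 1 - E 0 1 * E 1 0| ≤ 2*ε^2 := by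
      have m1 : |E 0 0 * E 1 1| ≤ ε^2 := by
        rw [abs_mul]; nlinarith [(hE 0 0).le, (hE 1 1).le, abs_nonneg (E 0 0), abs_nonneg (E 1 1)]
      have m2 : |E 0 1 * E 1 0| ≤ ε^2 := by
        rw [abs_mul]; nlinarith [(hE 0 1).le, (hE 1 0).le, abs_nonneg (E 0 1), abs_nonneg (E 1 0)]
      calc |E 0 0 * E 1 1 - E 0 1 * E 1 0| ≤ |E 0 0 * E 1 1| + |E 0 1 * E 1 0| := abs_sub _ _
        _ ≤ 2*ε^2 := by linarith
    calc |b * (E 0 0 + E 1 1) + (E 0 0 * E 1 1 - E 0 1 * E 1 0)|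
        ≤ |b * (E 0 0 + E 1 1)| + |E 0 0 * E 1 1 - E 0 1 * E 1 0| := abs_add_le _ _
      _ ≤ 2*ε + 2*ε^2 := by linarith
  -- complex eigen equation
  rw [eigen_iff, htrM, hdetM] at hz
  push_cast at hz
  -- key factorization
  have key : (z - (b:ℂ)*l1) * (z - (b:ℂ)*l2)
      = ((E * A).trace : ℂ) * z
        - ((((b • (1 : Matrix (Fin 2) (Fin 2) ℝ) + E).det - b^2) * A.det : ℝ) : ℂ) := by
    push_cast
    linear_combination hz - (b:ℂ)*z*hsum + (b:ℂ)^2*hprod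
  set r := ‖z‖ with hrdef
  have hr0 : 0 ≤ r := norm_nonneg _
  -- bound on r
  have hzsq : z^2 = ((b * A.trace + (E*A).trace : ℝ):ℂ) * z
      - (((b • (1 : Matrix (Fin 2) (Fin 2) ℝ) + E).det * A.det : ℝ):ℂ) := by
    push_cast
    linear_combination hz
  have hDabs : |(b • (1 : Matrix (Fin 2) (Fin 2) ℝ) + E).det| ≤ 1 + 2*ε + 2*ε^2 := by
    have := abs_sub_abs_le_abs_sub ((b • (1 : Matrix (Fin 2) (Fin 2) ℝ) + E).det) (b^2)
    have hb2' : |b^2| ≤ 1 := by rw [abs_of_nonneg (sq_nonneg b)]; nlinarith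
    linarith
  have hrle : r ≤ 4 := by
    have h1 : r^2 ≤ |b * A.trace + (E*A).trace| * r
        + |(b • (1 : Matrix (Fin 2) (Fin 2) ℝ) + E).det * A.det| := by
      calc r^2 = ‖z^2‖ := by rw [norm_pow]
        _ = ‖((b * A.trace + (E*A).trace : ℝ):ℂ) * z
            - (((b • (1 : Matrix (Fin 2) (Fin 2) ℝ) + E).det * A.det : ℝ):ℂ)‖ := by rw [hzsq]
        _ ≤ ‖((b * A.trace + (E*A).trace : ℝ):ℂ) * z‖
            + ‖(((b • (1 : Matrix (Fin 2) (Fin 2) ℝ) + E).det * A.det : ℝ):ℂ)‖ := norm_sub_le _ _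
        _ = |b * A.trace + (E*A).trace| * r
            + |(b • (1 : Matrix (Fin 2) (Fin 2) ℝ) + E).det * A.det| := by
            rw [norm_mul, Complex.norm_real, Real.norm_eq_abs, Complex.norm_real,
              Real.norm_eq_abs]
    have h2 : |b * A.trace + (E*A).trace| ≤ 2.05 := by
      have : |b * A.trace| ≤ 1.8 := by
        rw [abs_mul, abs_of_nonneg hb0.le]
        nlinarith [abs_nonneg A.trace]
      calc |b * A.trace + (E*A).trace| ≤ |b * A.trace| + |(E*A).trace| := abs_add_le _ _
        _ ≤ 2.05 := by nlinarith
    have h3 : |(b • (1 : Matrix (Fin 2) (Fin 2) ℝ) + E).det * A.det| ≤ 1 := by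
      rw [abs_mul]
      have hε20 : ε ≤ 1/20000 := hεsmall
      nlinarith [abs_nonneg ((b • (1 : Matrix (Fin 2) (Fin 2) ℝ) + E).det), abs_nonneg A.det]
    nlinarith [sq_nonneg (r - 4)]
  -- conclude
  show r ≤ 0.95
  by_contra hcon
  push_neg at hcon
  have hu : r - 0.9 ≤ ‖z - (b:ℂ)*l1‖ := by
    have h := norm_sub_norm_le z ((b:ℂ)*l1)
    have : ‖(b:ℂ)*l1‖ ≤ 0.9 := by
      rw [norm_mul, Complex.norm_real, Real.norm_eq_abs, abs_of_nonneg hb0.le]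
      nlinarith [norm_nonneg l1]
    linarith
  have hv : r - 0.9 ≤ ‖z - (b:ℂ)*l2‖ := by
    have h := norm_sub_norm_le z ((b:ℂ)*l2)
    have : ‖(b:ℂ)*l2‖ ≤ 0.9 := by
      rw [norm_mul, Complex.norm_real, Real.norm_eq_abs, abs_of_nonneg hb0.le]
      nlinarith [norm_nonneg l2]
    linarith
  have hlow : (r - 0.9) * (r - 0.9) ≤ ‖z - (b:ℂ)*l1‖ * ‖z - (b:ℂ)*l2‖ :=
    mul_le_mul hu hv (by linarith) (norm_nonneg _)
  have hup : ‖z - (b:ℂ)*l1‖ * ‖z - (b:ℂ)*l2‖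
      ≤ 4 * (ε * C) * r + (2*ε + 2*ε^2) * 0.81 := by
    rw [← norm_mul, key]
    calc ‖((E * A).trace : ℂ) * z
        - ((((b • (1 : Matrix (Fin 2) (Fin 2) ℝ) + E).det - b^2) * A.det : ℝ) : ℂ)‖
        ≤ ‖((E * A).trace : ℂ) * z‖
          + ‖((((b • (1 : Matrix (Fin 2) (Fin 2) ℝ) + E).det - b^2) * A.det : ℝ) : ℂ)‖ :=
          norm_sub_le _ _
      _ = |(E * A).trace| * r
          + |((b • (1 : Matrix (Fin 2) (Fin 2) ℝ) + E).det - b^2) * A.det| := by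
          rw [norm_mul, Complex.norm_real, Real.norm_eq_abs, Complex.norm_real,
            Real.norm_eq_abs]
      _ ≤ 4 * (ε * C) * r + (2*ε + 2*ε^2) * 0.81 := by
          rw [abs_mul]
          have := mul_le_mul hD hd (abs_nonneg _) (by positivity)
          nlinarith [abs_nonneg ((E*A).trace)]
  nlinarith [mul_pos (show (0:ℝ) < r - 0.95 by linarith) (show (0:ℝ) < r - 0.85 by linarith),
    mul_le_mul_of_nonneg_left hεsmall hε0.le]
end
end
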